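/- Define T : ℂ × ℝ² → ℂ² by T(c, t₁, t₂) = ( c·e^{−t₁ + i·t₂} , e^{t₁ − i·t₂} ), and let ω_can(u,v) = Re(u₁v₂ − v₁u₂) on ℂ². Then: (i) the first times the second component of T(c,t₁,t₂) equals c, i.e. T is a parametrization of the fibers of π(z₁,z₂) = z₁z₂; (ii) T pulls ω_can back to the standard form dc₁∧dt₁ + dc₂∧dt₂: for every point p = (c,t₁,t₂) and all tangent vectors u, v ∈ ℂ × ℝ² (written u = (u_{c₁}, u_{c₂}, u_{t₁}, u_{t₂})), one has ω_can(DT(p)u, DT(p)v) = u_{c₁}v_{t₁} − v_{c₁}u_{t₁} + u_{c₂}v_{t₂} − v_{c₂}u_{t₂}, where DT(p) denotes the real Fréchet derivative of T at p. -/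

import Mathlib

open Complex ContinuousLinearMap

noncomputable def Lmap : (ℂ × ℝ × ℝ) →L[ℝ] ℂ :=
  Complex.ofRealCLM.comp ((fst ℝ ℝ ℝ).comp (snd ℝ ℂ (ℝ × ℝ)))
    - Complex.I • Complex.ofRealCLM.comp ((snd ℝ ℝ ℝ).comp (snd ℝ ℂ (ℝ × ℝ)))

lemma Lmap_apply (q : ℂ × ℝ × ℝ) : Lmap q = (q.2.1 : ℂ) - Complex.I * q.2.2 := by
  simp [Lmap]

lemma alg_key (a b c d e f p1 : ℂ) (h : e * f = 1) :
    (-(p1 * (a * e)) + e * c) * (b * f) - (-(p1 * (b * e)) + e * d) * (a * f)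
      = c * b - d * a := by
  linear_combination (c * b - d * a) * h

/-- the parametrization `T(c,t₁,t₂) = (c·e^{−t₁+it₂}, e^{t₁−it₂})` of the
regular fibers of `π(z₁,z₂) = z₁z₂` pulls `ω_can(u,v) = Re(u₁v₂ − v₁u₂)` back to
`dc₁∧dt₁ + dc₂∧dt₂`. -/
theorem stmt3 (ω : ℂ × ℂ → ℂ × ℂ → ℝ)
    (hω : ∀ u v, ω u v = (u.1 * v.2 - v.1 * u.2).re)
    (T : ℂ × ℝ × ℝ → ℂ × ℂ)
    (hT : ∀ p : ℂ × ℝ × ℝ, T p =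
      (p.1 * Complex.exp (-(p.2.1 : ℂ) + Complex.I * (p.2.2 : ℂ)),
       Complex.exp ((p.2.1 : ℂ) - Complex.I * (p.2.2 : ℂ)))) :
    -- (i) T parametrizes the fibers of π(z₁,z₂) = z₁z₂
    (∀ p : ℂ × ℝ × ℝ, (T p).1 * (T p).2 = p.1)
    -- (ii) T*(ω_can) = dc₁∧dt₁ + dc₂∧dt₂
    ∧ (∀ p u v : ℂ × ℝ × ℝ,
        ω (fderiv ℝ T p u) (fderiv ℝ T p v)
          = u.1.re * v.2.1 - v.1.re * u.2.1 + u.1.im * v.2.2 - v.1.im * u.2.2) := by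
  have hfe : ∀ p : ℂ × ℝ × ℝ,
      Complex.exp (-(p.2.1:ℂ) + Complex.I * p.2.2) *
        Complex.exp ((p.2.1:ℂ) - Complex.I * p.2.2) = 1 := by
    intro p
    rw [← Complex.exp_add]
    ring_nf
    simp
  constructor
  · intro p
    rw [hT]
    dsimp only
    rw [mul_assoc, hfe p, mul_one]
  · intro p u v
    have hTfun : T = fun q : ℂ × ℝ × ℝ =>
        (q.1 * Complex.exp (-(q.2.1 : ℂ) + Complex.I * q.2.2),
         Complex.exp ((q.2.1 : ℂ) - Complex.I * q.2.2)) := funext hT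
    have hLneg : HasFDerivAt (fun q : ℂ × ℝ × ℝ => (-(q.2.1 : ℂ) + Complex.I * q.2.2))
        (-Lmap) p := by
      have := (-Lmap).hasFDerivAt (x := p)
      convert this using 1
      ext q
      simp [Lmap_apply]; ring
    have hL : HasFDerivAt (fun q : ℂ × ℝ × ℝ => ((q.2.1 : ℂ) - Complex.I * q.2.2)) Lmap p := by
      have := Lmap.hasFDerivAt (x := p)
      convert this using 1
      ext q
      simp [Lmap_apply]
    have hE1 : HasFDerivAt (fun q : ℂ × ℝ × ℝ => Complex.exp (-(q.2.1 : ℂ) + Complex.I * q.2.2))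
        ((((1 : ℂ →L[ℂ] ℂ).smulRight (Complex.exp (-(p.2.1:ℂ) + Complex.I * p.2.2))).restrictScalars ℝ).comp (-Lmap)) p :=
      (Complex.hasDerivAt_exp _).hasFDerivAt.restrictScalars ℝ |>.comp p hLneg
    have hE2 : HasFDerivAt (fun q : ℂ × ℝ × ℝ => Complex.exp ((q.2.1 : ℂ) - Complex.I * q.2.2))
        ((((1 : ℂ →L[ℂ] ℂ).smulRight (Complex.exp ((p.2.1:ℂ) - Complex.I * p.2.2))).restrictScalars ℝ).comp Lmap) p :=
      (Complex.hasDerivAt_exp _).hasFDerivAt.restrictScalars ℝ |>.comp p hL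
    have hD := HasFDerivAt.prodMk ((hasFDerivAt_fst (p := p) (𝕜 := ℝ) (E := ℂ) (F := ℝ × ℝ)).mul hE1) hE2
    rw [hTfun]
    erw [hD.fderiv]
    rw [hω]
    simp only [ContinuousLinearMap.prod_apply, ContinuousLinearMap.add_apply,
      ContinuousLinearMap.smul_apply, ContinuousLinearMap.comp_apply,
      ContinuousLinearMap.coe_restrictScalars', ContinuousLinearMap.smulRight_apply,
      ContinuousLinearMap.one_apply, ContinuousLinearMap.coe_fst',
      ContinuousLinearMap.neg_apply, Lmap_apply, smul_eq_mul, one_mul, mul_neg, neg_mul]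
    rw [alg_key _ _ _ _ _ _ _ (hfe p)]
    simp [Complex.sub_re, Complex.mul_re, Complex.ofReal_re, Complex.ofReal_im,
      Complex.sub_im, Complex.mul_im, Complex.I_re, Complex.I_im]
    ring
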